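/- Let (X_{ij}) be an n×n array of i.i.d. real random variables with common distribution P satisfying E|X| < ∞, and let g(p) = inf{r : P(X ≥ r) ≤ p} for 0 < p < 1. Assume that g(p) → ∞ as p → 0+ and that g is slowly varying at 0, i.e. for every c > 0, g(cp)/g(p) → 1 as p → 0+. Then the expected maximum of the n i.i.d. variables satisfies E[max_{1≤i≤n} X_i] = g(1/n)·(1 + o(1)) as n → ∞, i.e. E[max_{1≤i≤n} X_i]/g(1/n) → 1. -/

import Mathlib

open MeasureTheory ProbabilityTheory Filter Topology
open scoped ENNReal
set_option linter.unusedSectionVars false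

section quantile
variable {P : Measure ℝ} [IsProbabilityMeasure P]

private lemma tail_antitone : Antitone fun r : ℝ => P (Set.Ici r) :=
  fun _ _ hab => measure_mono (Set.Ici_subset_Ici.2 hab)

private lemma tail_nonempty {p : ℝ} (hp : 0 < p) :
    {r : ℝ | (P (Set.Ici r)).toReal ≤ p}.Nonempty := by
  have h0 : Tendsto (fun r : ℝ => P (Set.Ici r)) atTop (𝓝 (P (⋂ r : ℝ, Set.Ici r))) :=
    tendsto_measure_iInter_atTop (fun r => measurableSet_Ici.nullMeasurableSet)
      (fun a b hab => Set.Ici_subset_Ici.2 hab) ⟨0, measure_ne_top _ _⟩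
  have hempty : (⋂ r : ℝ, Set.Ici r) = ∅ := by
    ext x; simp only [Set.mem_iInter, Set.mem_Ici, Set.mem_empty_iff_false, iff_false, not_forall]
    exact ⟨x + 1, by push_neg; linarith⟩
  rw [hempty, measure_empty] at h0
  have := h0.eventually (gt_mem_nhds (show (0:ENNReal) < ENNReal.ofReal p by simpa using hp))
  obtain ⟨r, hr⟩ := this.exists
  exact ⟨r, ENNReal.toReal_le_of_le_ofReal hp.le hr.le⟩

private lemma tail_bddBelow {p : ℝ} (hp1 : p < 1) :
    BddBelow {r : ℝ | (P (Set.Ici r)).toReal ≤ p} := by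
  have h1 : Tendsto (fun r : ℝ => P (Set.Ici r)) atBot (𝓝 (P Set.univ)) :=
    tendsto_measure_Ici_atBot P
  rw [measure_univ] at h1
  have := h1.eventually (lt_mem_nhds (show ENNReal.ofReal p < 1 from ENNReal.ofReal_lt_one.2 hp1))
  obtain ⟨r₀, hr₀⟩ := this.exists_forall_of_atBot
  refine ⟨r₀, fun r hr => ?_⟩
  by_contra hlt
  push_neg at hlt
  have h2 := hr₀ r hlt.le
  have h3 : P (Set.Ici r) ≤ ENNReal.ofReal p :=
    ENNReal.le_ofReal_iff_toReal_le (measure_ne_top _ _) (le_trans ENNReal.toReal_nonneg hr) |>.2 hr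
  exact absurd (h3.trans_lt h2) (lt_irrefl _)

private lemma tail_meas_le {p r : ℝ} (hp : 0 < p)
    (hr : sInf {r : ℝ | (P (Set.Ici r)).toReal ≤ p} < r) :
    P (Set.Ici r) ≤ ENNReal.ofReal p := by
  obtain ⟨s, hs, hsr⟩ := exists_lt_of_csInf_lt (tail_nonempty hp) hr
  calc P (Set.Ici r) ≤ P (Set.Ici s) := tail_antitone hsr.le
  _ ≤ ENNReal.ofReal p := by
      rw [← ENNReal.ofReal_toReal (measure_ne_top P _)]
      exact ENNReal.ofReal_le_ofReal hs

private lemma quantile_tail_Ioi {p : ℝ} (hp : 0 < p) :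
    P (Set.Ioi (sInf {r : ℝ | (P (Set.Ici r)).toReal ≤ p})) ≤ ENNReal.ofReal p := by
  set q := sInf {r : ℝ | (P (Set.Ici r)).toReal ≤ p} with hq
  have hmono : Monotone (fun n : ℕ => Set.Ici (q + 1/(n+1))) := by
    intro m n hmn
    apply Set.Ici_subset_Ici.2
    have h1 : (1:ℝ)/(n+1) ≤ 1/(m+1) := by
      apply one_div_le_one_div_of_le (by positivity)
      have h2 : (m:ℝ) ≤ n := Nat.cast_le.2 hmn
      linarith
    linarith
  have hU : Set.Ioi q = ⋃ n : ℕ, Set.Ici (q + 1/(n+1)) := by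
    ext x
    simp only [Set.mem_Ioi, Set.mem_iUnion, Set.mem_Ici]
    constructor
    · intro hx
      obtain ⟨n, hn⟩ := exists_nat_one_div_lt (show (0:ℝ) < x - q by linarith)
      exact ⟨n, by push_cast at hn ⊢; linarith⟩
    · rintro ⟨n, hn⟩
      have : (0:ℝ) < 1/(n+1) := by positivity
      linarith
  rw [hU, (hmono.directed_le).measure_iUnion]
  exact iSup_le fun n => tail_meas_le hp (lt_add_of_pos_right q (by positivity))

private lemma lt_tail_of_lt_quantile {p s : ℝ} (hp1 : p < 1)
    (hs : s < sInf {r : ℝ | (P (Set.Ici r)).toReal ≤ p}) :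
    p < (P (Set.Ici s)).toReal := by
  by_contra h
  push_neg at h
  exact absurd (csInf_le (tail_bddBelow hp1) h) (not_le.2 hs)

private lemma quantile_antitone {p q : ℝ} (hp : 0 < p) (hq1 : q < 1) (hpq : p ≤ q) :
    sInf {r : ℝ | (P (Set.Ici r)).toReal ≤ q} ≤ sInf {r : ℝ | (P (Set.Ici r)).toReal ≤ p} :=
  csInf_le_csInf (tail_bddBelow hq1) (tail_nonempty hp) (fun r hr => le_trans hr hpq)

end quantile

private lemma tail_integral_bound {P : Measure ℝ} [IsProbabilityMeasure P]
    (g : ℝ → ℝ)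
    (hg : ∀ p : ℝ, 0 < p → p < 1 → g p = sInf {r : ℝ | (P (Set.Ici r)).toReal ≤ p})
    (hginf : Tendsto g (𝓝[>] 0) atTop)
    {δ₀ : ℝ} (hδ₀1 : δ₀ < 1)
    (hthr : ∀ p : ℝ, 0 < p → p ≤ δ₀ → 1 ≤ g p ∧ g (2⁻¹ * p) ≤ 3/2 * g p)
    {δ : ℝ} (hδ : 0 < δ) (hδδ₀ : δ ≤ δ₀) :
    ∫ x, max (x - g δ) 0 ∂P ≤ 6 * δ * g δ := by
  set a := g δ with ha
  have ha1 : 1 ≤ a := (hthr δ hδ hδδ₀).1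
  have hmem : ∀ k : ℕ, 0 < δ / 2^k ∧ δ / 2^k ≤ δ₀ := by
    intro k
    have h2k : (1:ℝ) ≤ 2^k := one_le_pow₀ (by norm_num)
    constructor
    · positivity
    · calc δ / 2^k ≤ δ / 1 := by
            apply div_le_div_of_nonneg_left hδ.le one_pos h2k
      _ = δ := div_one δ
      _ ≤ δ₀ := hδδ₀
  have hlt1 : ∀ k : ℕ, δ / 2^k < 1 := fun k => lt_of_le_of_lt (hmem k).2 hδ₀1
  have hgk : ∀ k : ℕ, g (δ / 2^k) ≤ (3/2)^k * g δ := by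
    intro k
    induction k with
    | zero => simp
    | succ k ih =>
      have h1 : δ / 2^(k+1) = 2⁻¹ * (δ / 2^k) := by ring
      have h2 := (hthr (δ / 2^k) (hmem k).1 (hmem k).2).2
      have h3 : (0:ℝ) < (3/2)^k := by positivity
      calc g (δ / 2^(k+1)) = g (2⁻¹ * (δ / 2^k)) := by rw [h1]
      _ ≤ 3/2 * g (δ / 2^k) := h2
      _ ≤ 3/2 * ((3/2)^k * g δ) := by nlinarith
      _ = (3/2)^(k+1) * g δ := by ring
  have hga : ∀ p q : ℝ, 0 < p → p ≤ q → q < 1 → g q ≤ g p := by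
    intro p q hp hpq hq1
    rw [hg p hp (lt_of_le_of_lt hpq hq1), hg q (lt_of_lt_of_le hp hpq) hq1]
    exact quantile_antitone hp hq1 hpq
  set b : ℕ → ℝ := fun k => g (δ / 2^k) - a with hb
  have hb0 : b 0 = 0 := by simp [hb, ha]
  have hbmono : Monotone b := by
    apply monotone_nat_of_le_succ
    intro k
    have : g (δ / 2^k) ≤ g (δ / 2^(k+1)) := by
      apply hga _ _ (hmem (k+1)).1 _ (hlt1 k)
      apply div_le_div_of_nonneg_left hδ.le (by positivity)
      exact pow_le_pow_right₀ (by norm_num) (Nat.le_succ k)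
    simp only [hb]
    linarith
  have hbnonneg : ∀ k, 0 ≤ b k := fun k => hb0 ▸ hbmono (Nat.zero_le k)
  have hbtop : Tendsto b atTop atTop := by
    have h1 : Tendsto (fun k : ℕ => δ / 2^k) atTop (𝓝[>] 0) := by
      rw [tendsto_nhdsWithin_iff]
      constructor
      · have := tendsto_pow_atTop_nhds_zero_of_lt_one (show (0:ℝ) ≤ 1/2 by norm_num)
          (show (1:ℝ)/2 < 1 by norm_num)
        have h2 := this.const_mul δ
        simp only [mul_zero] at h2
        convert h2 using 2 with k
        rw [div_pow, one_pow, div_eq_mul_inv, mul_comm]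
        ring
      · exact Eventually.of_forall fun k => (hmem k).1
    exact tendsto_atTop_add_const_right _ (-a) (hginf.comp h1)
  have hcover : Set.Ioi (0:ℝ) ⊆ ⋃ k, Set.Ioc (b k) (b (k+1)) := by
    intro t ht
    simp only [Set.mem_Ioi] at ht
    obtain ⟨m, hm⟩ := (hbtop.eventually_ge_atTop t).exists
    have hex : ∃ k, b k < t ∧ t ≤ b (k+1) := by
      by_contra hcon
      push_neg at hcon
      have hall : ∀ k, b k < t := by
        intro k
        induction k with
        | zero => rw [hb0]; exact ht
        | succ k ih => exact hcon k ih
      exact absurd hm (not_le.2 (hall m))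
    obtain ⟨k, hk1, hk2⟩ := hex
    exact Set.mem_iUnion.2 ⟨k, hk1, hk2⟩
  have hPt : ∀ k : ℕ, ∀ t ∈ Set.Ioc (b k) (b (k+1)),
      P {x : ℝ | t < max (x - a) 0} ≤ ENNReal.ofReal (δ / 2^k) := by
    intro k t ht
    obtain ⟨ht1, _⟩ := ht
    have htpos : 0 < t := lt_of_le_of_lt (hbnonneg k) ht1
    have hset : {x : ℝ | t < max (x - a) 0} = Set.Ioi (a + t) := by
      ext x
      simp only [Set.mem_setOf_eq, Set.mem_Ioi, lt_max_iff]
      constructor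
      · rintro (h | h)
        · linarith
        · exact absurd h (not_lt.2 htpos.le)
      · intro h; left; linarith
    rw [hset]
    have hat : g (δ / 2^k) < a + t := by
      simp only [hb] at ht1; linarith
    rw [hg (δ / 2^k) (hmem k).1 (hlt1 k)] at hat
    calc P (Set.Ioi (a + t)) ≤ P (Set.Ici (a + t)) := measure_mono Set.Ioi_subset_Ici_self
    _ ≤ ENNReal.ofReal (δ / 2^k) := tail_meas_le (hmem k).1 hat
  -- layer cake
  have hf_nn : 0 ≤ᵐ[P] fun x => max (x - a) 0 := Eventually.of_forall fun x => le_max_right _ _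
  have hf_mble : Measurable fun x : ℝ => max (x - a) 0 :=
    (measurable_id.sub_const a).max measurable_const
  have key : ∫⁻ x, ENNReal.ofReal (max (x - a) 0) ∂P
      = ∫⁻ t in Set.Ioi 0, P {x : ℝ | t < max (x - a) 0} :=
    lintegral_eq_lintegral_meas_lt P hf_nn hf_mble.aemeasurable
  set c : ℝ := 3/2 * δ * g δ with hc
  have hgδpos : (0:ℝ) < g δ := lt_of_lt_of_le one_pos ha1
  have hcnn : 0 ≤ c := by rw [hc]; positivity
  have hterm : ∀ k : ℕ, (∫⁻ t in Set.Ioc (b k) (b (k+1)), P {x : ℝ | t < max (x - a) 0})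
      ≤ ENNReal.ofReal (c * (3/4)^k) := by
    intro k
    have hbk1 : b (k+1) - b k ≤ (3/2)^(k+1) * g δ := by
      have h1 := hgk (k+1)
      have h2 := hbnonneg k
      simp only [hb] at h2 ⊢
      have : (0:ℝ) < a := lt_of_lt_of_le one_pos ha1
      nlinarith [hbnonneg k]
    calc (∫⁻ t in Set.Ioc (b k) (b (k+1)), P {x : ℝ | t < max (x - a) 0})
        ≤ ∫⁻ _ in Set.Ioc (b k) (b (k+1)), ENNReal.ofReal (δ / 2^k) :=
          setLIntegral_mono measurable_const (hPt k)
      _ = ENNReal.ofReal (δ / 2^k) * volume (Set.Ioc (b k) (b (k+1))) := setLIntegral_const _ _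
      _ = ENNReal.ofReal (δ / 2^k) * ENNReal.ofReal (b (k+1) - b k) := by rw [Real.volume_Ioc]
      _ ≤ ENNReal.ofReal (δ / 2^k) * ENNReal.ofReal ((3/2)^(k+1) * g δ) :=
          mul_le_mul_right (ENNReal.ofReal_le_ofReal hbk1) _
      _ = ENNReal.ofReal (δ / 2^k * ((3/2)^(k+1) * g δ)) :=
          (ENNReal.ofReal_mul (by positivity)).symm
      _ = ENNReal.ofReal (c * (3/4)^k) := by
          congr 1
          have h4 : (4:ℝ)^k = 2^k * 2^k := by rw [← mul_pow]; norm_num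
          have h3 : (3:ℝ)^(k+1) = 3 * 3^k := by ring
          have h2 : (2:ℝ)^(k+1) = 2 * 2^k := by ring
          rw [hc]
          field_simp
          have h5 : (3/4:ℝ)^k = (3/2)^k * (1/2)^k := by rw [← mul_pow]; norm_num
          have h6 : (2:ℝ)^k * (1/2)^k = 1 := by rw [← mul_pow]; norm_num
          rw [h5]
          linear_combination (-3 * (3/2:ℝ)^k) * h6
  have hquarter : (1 - ENNReal.ofReal (3/4))⁻¹ = (4:ℝ≥0∞) := by
    have h1 : (1:ℝ≥0∞) - ENNReal.ofReal (3/4) = ENNReal.ofReal (1/4) := by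
      rw [← ENNReal.ofReal_one, ← ENNReal.ofReal_sub _ (by norm_num)]
      norm_num
    rw [h1, ← ENNReal.ofReal_inv_of_pos (by norm_num)]
    norm_num
  have hmain : (∫⁻ x, ENNReal.ofReal (max (x - a) 0) ∂P) ≤ ENNReal.ofReal (c * 4) := by
    rw [key]
    calc (∫⁻ t in Set.Ioi 0, P {x : ℝ | t < max (x - a) 0})
        ≤ ∫⁻ t in ⋃ k : ℕ, Set.Ioc (b k) (b (k+1)), P {x : ℝ | t < max (x - a) 0} :=
          lintegral_mono_set hcover
      _ ≤ ∑' k : ℕ, ∫⁻ t in Set.Ioc (b k) (b (k+1)), P {x : ℝ | t < max (x - a) 0} :=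
          lintegral_iUnion_le _ _
      _ ≤ ∑' k : ℕ, ENNReal.ofReal (c * (3/4)^k) := ENNReal.tsum_le_tsum hterm
      _ = ∑' k : ℕ, ENNReal.ofReal c * (ENNReal.ofReal (3/4))^k := by
          apply tsum_congr
          intro k
          rw [← ENNReal.ofReal_pow (by norm_num), ← ENNReal.ofReal_mul hcnn]
      _ = ENNReal.ofReal c * (1 - ENNReal.ofReal (3/4))⁻¹ := by
          rw [ENNReal.tsum_mul_left, ENNReal.tsum_geometric]
      _ = ENNReal.ofReal c * (4:ℝ≥0∞) := by rw [hquarter]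
      _ = ENNReal.ofReal (c * 4) := by
          rw [ENNReal.ofReal_mul hcnn]
          norm_num
  rw [integral_eq_lintegral_of_nonneg_ae hf_nn hf_mble.aestronglyMeasurable]
  have hfin := ENNReal.toReal_mono ENNReal.ofReal_ne_top hmain
  rw [ENNReal.toReal_ofReal (by positivity)] at hfin
  calc (∫⁻ x, ENNReal.ofReal (max (x - a) 0) ∂P).toReal ≤ c * 4 := hfin
  _ = 6 * δ * g δ := by rw [hc]; ring

section bounds
variable {Ω : Type*} [MeasurableSpace Ω] {μ : Measure Ω} [IsProbabilityMeasure μ]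
  {X : ℕ → Ω → ℝ} {P : Measure ℝ} [IsProbabilityMeasure P]

private lemma integrable_X (hmeas : ∀ i, Measurable (X i)) (hlaw : ∀ i, μ.map (X i) = P)
    (hint : Integrable id P) (i : ℕ) : Integrable (X i) μ := by
  have h1 : Integrable id (μ.map (X i)) := (hlaw i).symm ▸ hint
  exact (integrable_map_measure aestronglyMeasurable_id (hmeas i).aemeasurable).1 h1

private lemma integrable_Msup (hmeas : ∀ i, Measurable (X i)) (hlaw : ∀ i, μ.map (X i) = P)
    (hint : Integrable id P) {n : ℕ} (hn : 0 < n) :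
    Integrable (fun ω => ⨆ i : Fin n, X i ω) μ := by
  haveI : Nonempty (Fin n) := ⟨⟨0, hn⟩⟩
  apply Integrable.mono' (integrable_finset_sum (Finset.range n)
    (fun i _ => (integrable_X hmeas hlaw hint i).abs))
    (Measurable.iSup fun i : Fin n => hmeas i).aestronglyMeasurable
  apply ae_of_all
  intro ω
  have hbdd : BddAbove (Set.range fun i : Fin n => X i ω) := (Set.finite_range _).bddAbove
  rw [Real.norm_eq_abs, abs_le]
  constructor
  · calc -(∑ i ∈ Finset.range n, |X i ω|) ≤ -|X 0 ω| := by
          apply neg_le_neg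
          exact Finset.single_le_sum (fun i _ => abs_nonneg (X i ω))
            (Finset.mem_range.2 hn)
    _ ≤ X 0 ω := neg_abs_le _
    _ ≤ ⨆ i : Fin n, X i ω := le_ciSup hbdd ⟨0, hn⟩
  · apply ciSup_le
    intro i
    calc X i ω ≤ |X (i : ℕ) ω| := le_abs_self _
    _ ≤ ∑ j ∈ Finset.range n, |X j ω| :=
        Finset.single_le_sum (fun j _ => abs_nonneg (X j ω)) (Finset.mem_range.2 i.2)

private lemma upper_bound (hmeas : ∀ i, Measurable (X i)) (hlaw : ∀ i, μ.map (X i) = P)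
    (hint : Integrable id P) {n : ℕ} (hn : 0 < n) {a : ℝ} (ha : 0 ≤ a) :
    (∫ ω, (⨆ i : Fin n, X i ω) ∂μ) ≤ a + n * ∫ x, max (x - a) 0 ∂P := by
  haveI : Nonempty (Fin n) := ⟨⟨0, hn⟩⟩
  have hXi := integrable_X hmeas hlaw hint
  have hpos : ∀ i : ℕ, Integrable (fun ω => max (X i ω - a) 0) μ :=
    fun i => ((hXi i).sub (integrable_const a)).pos_part
  have hRHSint : Integrable (fun ω => a + ∑ i ∈ Finset.range n, max (X i ω - a) 0) μ :=
    (integrable_const a).add (integrable_finset_sum _ (fun i _ => hpos i))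
  have hptwise : ∀ ω, (⨆ i : Fin n, X i ω) ≤ a + ∑ i ∈ Finset.range n, max (X i ω - a) 0 := by
    intro ω
    apply ciSup_le
    intro i
    calc X i ω ≤ a + max (X (i:ℕ) ω - a) 0 := by
          have := le_max_left (X (i:ℕ) ω - a) 0
          linarith
    _ ≤ a + ∑ j ∈ Finset.range n, max (X j ω - a) 0 := by
        have h := Finset.single_le_sum (f := fun j => max (X j ω - a) 0)
          (fun j _ => le_max_right _ _) (Finset.mem_range.2 i.2)
        linarith
  calc (∫ ω, (⨆ i : Fin n, X i ω) ∂μ)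
      ≤ ∫ ω, (a + ∑ i ∈ Finset.range n, max (X i ω - a) 0) ∂μ :=
        integral_mono (integrable_Msup hmeas hlaw hint hn) hRHSint hptwise
    _ = a + ∑ i ∈ Finset.range n, ∫ ω, max (X i ω - a) 0 ∂μ := by
        rw [integral_add (integrable_const a) (integrable_finset_sum _ (fun i _ => hpos i)),
          integral_const, integral_finset_sum _ (fun i _ => hpos i)]
        simp
    _ = a + n * ∫ x, max (x - a) 0 ∂P := by
        congr 1
        have hmap : ∀ i : ℕ, (∫ ω, max (X i ω - a) 0 ∂μ) = ∫ x, max (x - a) 0 ∂P := by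
          intro i
          rw [← hlaw i, integral_map (hmeas i).aemeasurable]
          exact (((measurable_id.sub_const a).max measurable_const).aestronglyMeasurable)
        rw [Finset.sum_congr rfl (fun i _ => hmap i)]
        simp [mul_comm]

end bounds

section lowbound
variable {Ω : Type*} [MeasurableSpace Ω] {μ : Measure Ω} [IsProbabilityMeasure μ]
  {X : ℕ → Ω → ℝ} {P : Measure ℝ} [IsProbabilityMeasure P]

private lemma lower_bound (hmeas : ∀ i, Measurable (X i))
    (hindep : iIndepFun X μ)
    (hlaw : ∀ i, μ.map (X i) = P) (hint : Integrable id P)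
    {n : ℕ} (hn : 0 < n) {s q : ℝ} (hs : 0 ≤ s) (hq : (P (Set.Iio s)).toReal ≤ q) :
    s * (1 - q^n) - (∫ x, max (-x) 0 ∂P) ≤ ∫ ω, (⨆ i : Fin n, X i ω) ∂μ := by
  haveI : Nonempty (Fin n) := ⟨⟨0, hn⟩⟩
  set M := fun ω => ⨆ i : Fin n, X i ω with hM
  have hMmeas : Measurable M := Measurable.iSup fun i : Fin n => hmeas i
  set A := {ω | s ≤ M ω} with hA
  have hAmeas : MeasurableSet A := measurableSet_le measurable_const hMmeas
  have hcompl : Aᶜ = ⋂ i ∈ Finset.range n, X i ⁻¹' (Set.Iio s) := by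
    ext ω
    simp only [Set.mem_compl_iff, hA, Set.mem_setOf_eq, not_le, Set.mem_iInter,
      Set.mem_preimage, Set.mem_Iio, Finset.mem_range]
    constructor
    · intro h i hi
      exact lt_of_le_of_lt
        (le_ciSup (f := fun j : Fin n => X j ω) ((Set.finite_range _).bddAbove) ⟨i, hi⟩) h
    · intro h
      obtain ⟨i, hi⟩ := Finite.exists_max (fun i : Fin n => X i ω)
      exact lt_of_le_of_lt (ciSup_le hi) (h i i.2)
  have hprod : μ Aᶜ = P (Set.Iio s) ^ n := by
    rw [hcompl, hindep.meas_biInter (fun i _ => ⟨Set.Iio s, measurableSet_Iio, rfl⟩)]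
    have heach : ∀ i ∈ Finset.range n, μ (X i ⁻¹' Set.Iio s) = P (Set.Iio s) := by
      intro i _
      rw [← hlaw i, Measure.map_apply (hmeas i) measurableSet_Iio]
    rw [Finset.prod_congr rfl heach, Finset.prod_const, Finset.card_range]
  have hAtoReal : (1:ℝ) - ((P (Set.Iio s)).toReal)^n = (μ A).toReal := by
    have h1 : μ Aᶜ ≤ 1 := prob_le_one
    have h2 : μ A = 1 - μ Aᶜ := by
      have h3 := prob_compl_eq_one_sub (μ := μ) hAmeas.compl
      rwa [compl_compl] at h3
    rw [h2, ENNReal.toReal_sub_of_le h1 ENNReal.one_ne_top, hprod, ENNReal.toReal_pow,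
      ENNReal.toReal_one]
  have hAq : 1 - q^n ≤ (μ A).toReal := by
    rw [← hAtoReal]
    have := pow_le_pow_left₀ ENNReal.toReal_nonneg hq n
    linarith
  have hXi := integrable_X hmeas hlaw hint
  have hptwise : ∀ ω, A.indicator (fun _ => s) ω - max (-(X 0 ω)) 0 ≤ M ω := by
    intro ω
    have hbdd : BddAbove (Set.range fun i : Fin n => X i ω) := (Set.finite_range _).bddAbove
    have hX0 : X 0 ω ≤ M ω := le_ciSup hbdd ⟨0, hn⟩
    have hneg : -(max (-(X 0 ω)) 0) ≤ X 0 ω := by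
      rcases le_total (X 0 ω) 0 with h | h
      · rw [max_eq_left (by linarith)]; linarith
      · rw [max_eq_right (by linarith)]; linarith
    by_cases hω : ω ∈ A
    · rw [Set.indicator_of_mem hω]
      have h4 : s ≤ M ω := hω
      have h5 : (0:ℝ) ≤ max (-(X 0 ω)) 0 := le_max_right _ _
      linarith
    · rw [Set.indicator_of_notMem hω]
      linarith
  have hIndInt : Integrable (A.indicator (fun _ => s)) μ :=
    (integrable_const s).indicator hAmeas
  have hNegInt : Integrable (fun ω => max (-(X 0 ω)) 0) μ := ((hXi 0).neg).pos_part
  have hint1 : Integrable (fun ω => A.indicator (fun _ => s) ω - max (-(X 0 ω)) 0) μ :=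
    hIndInt.sub hNegInt
  have hmono := integral_mono hint1 (integrable_Msup hmeas hlaw hint hn) hptwise
  rw [integral_sub hIndInt hNegInt, integral_indicator_const s hAmeas] at hmono
  have hmapneg : (∫ ω, max (-(X 0 ω)) 0 ∂μ) = ∫ x, max (-x) 0 ∂P := by
    rw [← hlaw 0, integral_map (hmeas 0).aemeasurable]
    exact ((measurable_id.neg.max measurable_const)).aestronglyMeasurable
  rw [hmapneg] at hmono
  have hfin : s * (1 - q^n) ≤ (μ A).toReal • s := by
    rw [smul_eq_mul, mul_comm]
    exact mul_le_mul_of_nonneg_right hAq hs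
  rw [measureReal_def] at hmono
  linarith

end lowbound

theorem expectation_max_iid
    {Ω : Type*} [MeasurableSpace Ω] (μ : Measure Ω) [IsProbabilityMeasure μ]
    (X : ℕ → Ω → ℝ) (hmeas : ∀ i, Measurable (X i))
    (hindep : iIndepFun X μ)
    (P : Measure ℝ) [IsProbabilityMeasure P]
    (hlaw : ∀ i, μ.map (X i) = P)
    (hint : Integrable id P)
    (g : ℝ → ℝ)
    (hg : ∀ p : ℝ, 0 < p → p < 1 → g p = sInf {r : ℝ | (P (Set.Ici r)).toReal ≤ p})
    (hginf : Tendsto g (𝓝[>] 0) atTop)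
    (hslow : ∀ c : ℝ, 0 < c → Tendsto (fun p => g (c * p) / g p) (𝓝[>] 0) (𝓝 1)) :
    Tendsto (fun n : ℕ => (∫ ω, (⨆ i : Fin n, X i ω) ∂μ) / g (1 / n)) atTop (𝓝 1) := by
  -- threshold δ₀
  have hev1 : ∀ᶠ p in 𝓝[>] (0:ℝ), 1 ≤ g p := hginf.eventually_ge_atTop 1
  have hev2 : ∀ᶠ p in 𝓝[>] (0:ℝ), g (2⁻¹ * p) / g p < 3/2 :=
    (hslow 2⁻¹ (by norm_num)).eventually_lt_const (by norm_num)
  obtain ⟨u, hu, husub⟩ := mem_nhdsGT_iff_exists_Ioc_subset.1 (hev1.and hev2)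
  set δ₀ : ℝ := min u (1/2) with hδ₀def
  have hδ₀pos : 0 < δ₀ := lt_min hu (by norm_num)
  have hδ₀1 : δ₀ < 1 := lt_of_le_of_lt (min_le_right _ _) (by norm_num)
  have hthr : ∀ p : ℝ, 0 < p → p ≤ δ₀ → 1 ≤ g p ∧ g (2⁻¹ * p) ≤ 3/2 * g p := by
    intro p hp hple
    have hmem : p ∈ Set.Ioc 0 u := ⟨hp, hple.trans (min_le_left _ _)⟩
    obtain ⟨h1, h2⟩ := husub hmem
    refine ⟨h1, ?_⟩
    have hgp : 0 < g p := lt_of_lt_of_le one_pos h1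
    exact ((div_lt_iff₀ hgp).1 h2).le
  -- tendsto infrastructure
  have htend0 : Tendsto (fun n : ℕ => 1/(n:ℝ)) atTop (𝓝[>] 0) := by
    rw [tendsto_nhdsWithin_iff]
    refine ⟨tendsto_one_div_atTop_nhds_zero_nat, eventually_atTop.2 ⟨1, fun n hn => ?_⟩⟩
    have : (0:ℝ) < n := by exact_mod_cast hn
    exact one_div_pos.2 this
  have hgtop : Tendsto (fun n : ℕ => g (1/(n:ℝ))) atTop atTop := hginf.comp htend0
  have hC0 : 0 ≤ ∫ x, max (-x) 0 ∂P := integral_nonneg (fun x => le_max_right _ _)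
  set C : ℝ := ∫ x, max (-x) 0 ∂P with hCdef
  rw [tendsto_order]
  constructor
  · -- lower bound : ∀ a < 1, eventually a < f n
    intro a ha
    set K : ℝ := max 1 (Real.log (2/(1-a))) with hKdef
    have hK1 : (1:ℝ) ≤ K := le_max_left _ _
    have hKpos : 0 < K := lt_of_lt_of_le one_pos hK1
    set e : ℝ := Real.exp (-K) with hedef
    have he0 : 0 < e := Real.exp_pos _
    have he : e < 1 - a := by
      have h2 : Real.exp (-K) ≤ Real.exp (-(Real.log (2/(1-a)))) :=
        Real.exp_le_exp.2 (neg_le_neg (le_max_right _ _))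
      have h3 : Real.exp (-(Real.log (2/(1-a)))) = (1-a)/2 := by
        rw [Real.exp_neg, Real.exp_log (div_pos two_pos (by linarith))]
        rw [inv_div]
      rw [hedef]
      calc Real.exp (-K) ≤ (1-a)/2 := h3 ▸ h2
      _ < 1 - a := by linarith
    have htendK : Tendsto (fun n : ℕ => K * (1/(n:ℝ))) atTop (𝓝[>] 0) := by
      rw [tendsto_nhdsWithin_iff]
      constructor
      · have h4 := tendsto_one_div_atTop_nhds_zero_nat.const_mul K
        rwa [mul_zero] at h4
      · refine eventually_atTop.2 ⟨1, fun n hn => ?_⟩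
        have : (0:ℝ) < n := by exact_mod_cast hn
        have h5 : (0:ℝ) < 1/(n:ℝ) := one_div_pos.2 this
        exact mul_pos hKpos h5
    have hratio : Tendsto (fun n : ℕ => g (K * (1/(n:ℝ))) / g (1/(n:ℝ))) atTop (𝓝 1) :=
      (hslow K hKpos).comp htend0
    have hinvG : Tendsto (fun n : ℕ => 1 / g (1/(n:ℝ))) atTop (𝓝 0) := by
      simpa [one_div, Pi.inv_def] using hgtop.inv_tendsto_atTop
    have hφ : Tendsto (fun n : ℕ => (1 - e) * (g (K * (1/(n:ℝ))) / g (1/(n:ℝ)))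
        - ((1 - e) + C) * (1 / g (1/(n:ℝ)))) atTop (𝓝 ((1 - e) * 1 - ((1 - e) + C) * 0)) :=
      (hratio.const_mul _).sub (hinvG.const_mul _)
    rw [mul_one, mul_zero, sub_zero] at hφ
    have hφa : ∀ᶠ n : ℕ in atTop, a < (1 - e) * (g (K * (1/(n:ℝ))) / g (1/(n:ℝ)))
        - ((1 - e) + C) * (1 / g (1/(n:ℝ))) := hφ.eventually_const_lt (by linarith)
    have hgK1 : ∀ᶠ n : ℕ in atTop, 1 ≤ g (K * (1/(n:ℝ))) :=
      (hginf.comp htendK).eventually_ge_atTop 1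
    have hKn1 : ∀ᶠ n : ℕ in atTop, K * (1/(n:ℝ)) < 1 :=
      (htendK.mono_right nhdsWithin_le_nhds).eventually_lt_const one_pos
    have hge1 : ∀ᶠ n : ℕ in atTop, 1 ≤ g (1/(n:ℝ)) := hgtop.eventually_ge_atTop 1
    filter_upwards [hφa, hgK1, hKn1, hge1, eventually_ge_atTop 1] with n hφn hgK1n hKn1n hge1n hn1
    have hnpos : 0 < n := hn1
    have hnR : (0:ℝ) < n := by exact_mod_cast hn1
    have hGpos : 0 < g (1/(n:ℝ)) := lt_of_lt_of_le one_pos hge1n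
    have hKn0 : 0 < K * (1/(n:ℝ)) := mul_pos hKpos (one_div_pos.2 hnR)
    set s : ℝ := g (K * (1/(n:ℝ))) - 1 with hsdef
    have hs0 : 0 ≤ s := by rw [hsdef]; linarith
    set q : ℝ := 1 - K * (1/(n:ℝ)) with hqdef
    have hq0 : 0 ≤ q := by rw [hqdef]; linarith
    have hq : (P (Set.Iio s)).toReal ≤ q := by
      have hslt : s < sInf {r : ℝ | (P (Set.Ici r)).toReal ≤ K * (1/(n:ℝ))} := by
        rw [← hg _ hKn0 hKn1n, hsdef]
        linarith
      have htail := lt_tail_of_lt_quantile (P := P) hKn1n hslt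
      have hcompl : P (Set.Iio s) = 1 - P (Set.Ici s) := by
        rw [← Set.compl_Ici, prob_compl_eq_one_sub measurableSet_Ici]
      rw [hcompl, ENNReal.toReal_sub_of_le prob_le_one ENNReal.one_ne_top, ENNReal.toReal_one,
        hqdef]
      linarith
    have hlow := lower_bound hmeas hindep hlaw hint hnpos hs0 hq
    have hqn : q ^ n ≤ e := by
      have h6 : q ≤ Real.exp (-(K * (1/(n:ℝ)))) := by
        have := Real.add_one_le_exp (-(K * (1/(n:ℝ))))
        rw [hqdef]; linarith
      calc q ^ n ≤ Real.exp (-(K * (1/(n:ℝ)))) ^ n := pow_le_pow_left₀ hq0 h6 n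
      _ = Real.exp ((n:ℝ) * (-(K * (1/(n:ℝ))))) := (Real.exp_nat_mul _ n).symm
      _ = Real.exp (-K) := by
          congr 1
          have hne : (n:ℝ) ≠ 0 := hnR.ne'
          field_simp
      _ = e := rfl
    rw [lt_div_iff₀ hGpos]
    have h7 : a * g (1/(n:ℝ)) < ((1 - e) * (g (K * (1/(n:ℝ))) / g (1/(n:ℝ)))
        - ((1 - e) + C) * (1 / g (1/(n:ℝ)))) * g (1/(n:ℝ)) :=
      mul_lt_mul_of_pos_right hφn hGpos
    have h8 : ((1 - e) * (g (K * (1/(n:ℝ))) / g (1/(n:ℝ)))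
        - ((1 - e) + C) * (1 / g (1/(n:ℝ)))) * g (1/(n:ℝ)) = s * (1 - e) - C := by
      rw [hsdef]
      field_simp
      ring
    have h9 : s * (1 - q^n) - C ≤ ∫ ω, (⨆ i : Fin n, X i ω) ∂μ := hlow
    have h10 : s * (1 - e) ≤ s * (1 - q^n) := by
      apply mul_le_mul_of_nonneg_left _ hs0
      linarith
    rw [h8] at h7
    calc a * g (1/(n:ℝ)) < s * (1 - e) - C := h7
    _ ≤ s * (1 - q^n) - C := by linarith
    _ ≤ _ := h9
  · -- upper bound : ∀ a > 1, eventually f n < a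
    intro a ha
    set ε : ℝ := min δ₀ ((a-1)/12) with hεdef
    have hε : 0 < ε := lt_min hδ₀pos (by linarith)
    have hεδ₀ : ε ≤ δ₀ := min_le_left _ _
    have hε12 : 6 * ε ≤ (a-1)/2 := by
      have := min_le_right δ₀ ((a-1)/12)
      have h1 : ε ≤ (a-1)/12 := this
      linarith
    have hψ : Tendsto (fun n : ℕ => (1 + 6*ε) * (g (ε * (1/(n:ℝ))) / g (1/(n:ℝ)))) atTop
        (𝓝 ((1 + 6*ε) * 1)) := ((hslow ε hε).comp htend0).const_mul _
    rw [mul_one] at hψ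
    have hψa : ∀ᶠ n : ℕ in atTop,
        (1 + 6*ε) * (g (ε * (1/(n:ℝ))) / g (1/(n:ℝ))) < a := hψ.eventually_lt_const (by linarith)
    have hge1 : ∀ᶠ n : ℕ in atTop, 1 ≤ g (1/(n:ℝ)) := hgtop.eventually_ge_atTop 1
    filter_upwards [hψa, hge1, eventually_ge_atTop 1] with n hψn hge1n hn1
    have hnpos : 0 < n := hn1
    have hnR : (0:ℝ) < n := by exact_mod_cast hn1
    have hGpos : 0 < g (1/(n:ℝ)) := lt_of_lt_of_le one_pos hge1n
    have hδpos : 0 < ε * (1/(n:ℝ)) := mul_pos hε (one_div_pos.2 hnR)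
    have hδδ₀ : ε * (1/(n:ℝ)) ≤ δ₀ := by
      have h1 : (1:ℝ)/(n:ℝ) ≤ 1 := by
        rw [div_le_one hnR]
        exact_mod_cast hn1
      calc ε * (1/(n:ℝ)) ≤ ε * 1 := mul_le_mul_of_nonneg_left h1 hε.le
      _ = ε := mul_one ε
      _ ≤ δ₀ := hεδ₀
    have ha1 : 1 ≤ g (ε * (1/(n:ℝ))) := (hthr _ hδpos hδδ₀).1
    have hub := upper_bound hmeas hlaw hint hnpos (a := g (ε * (1/(n:ℝ)))) (by linarith)
    have htail := tail_integral_bound g hg hginf hδ₀1 hthr hδpos hδδ₀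
    have hnmul : (n:ℝ) * (6 * (ε * (1/(n:ℝ))) * g (ε * (1/(n:ℝ)))) = 6 * ε * g (ε * (1/(n:ℝ))) := by
      field_simp
    have h2 : (∫ ω, (⨆ i : Fin n, X i ω) ∂μ) ≤ (1 + 6*ε) * g (ε * (1/(n:ℝ))) := by
      have h3 : (n:ℝ) * (∫ x, max (x - g (ε * (1/(n:ℝ)))) 0 ∂P)
          ≤ (n:ℝ) * (6 * (ε * (1/(n:ℝ))) * g (ε * (1/(n:ℝ)))) :=
        mul_le_mul_of_nonneg_left htail (by positivity)
      rw [hnmul] at h3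
      calc (∫ ω, (⨆ i : Fin n, X i ω) ∂μ)
          ≤ g (ε * (1/(n:ℝ))) + n * ∫ x, max (x - g (ε * (1/(n:ℝ)))) 0 ∂P := hub
      _ ≤ g (ε * (1/(n:ℝ))) + 6 * ε * g (ε * (1/(n:ℝ))) := by linarith
      _ = (1 + 6*ε) * g (ε * (1/(n:ℝ))) := by ring
    rw [div_lt_iff₀ hGpos]
    calc (∫ ω, (⨆ i : Fin n, X i ω) ∂μ) ≤ (1 + 6*ε) * g (ε * (1/(n:ℝ))) := h2
    _ = ((1 + 6*ε) * (g (ε * (1/(n:ℝ))) / g (1/(n:ℝ)))) * g (1/(n:ℝ)) := by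
        field_simp
    _ < a * g (1/(n:ℝ)) := mul_lt_mul_of_pos_right hψn hGpos
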